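/- arXiv:1707.04062 — 7 statements merged into one kernel-verified Lean document; each statement's English description precedes it below -/
import Mathlib

section
/- Let S be a numerical semigroup with conductor c, and let I be a proper maximum sparse ideal of S. Then the leader of I (the largest element of S \ I) is greater than or equal to c. More precisely, the leader equals 2g - 1 + #(S \ I) where g is the genus of S, hence is at least 2g, which is at least c. -/
/-- `S` is a numerical semigroup: it contains `0`, is closed under addition,
and has finite complement in `ℕ`. -/
def IsNumericalSemigroup (S : Set ℕ) : Prop :=
  0 ∈ S ∧ (∀ a ∈ S, ∀ b ∈ S, a + b ∈ S) ∧ Sᶜ.Finite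

/-- The genus of `S`: the number of gaps, i.e. of elements of `ℕ \ S`. -/
noncomputable def genus (S : Set ℕ) : ℕ := Sᶜ.ncard

/-- The numConductor of `S`: the smallest integer `c` such that every integer `≥ c`
belongs to `S`. -/
noncomputable def numConductor (S : Set ℕ) : ℕ := sInf {c : ℕ | ∀ m, c ≤ m → m ∈ S}

/-- `I` is an ideal of `S`: a nonempty subset of `S` with `I + S ⊆ I`. -/
def IsIdeal (S I : Set ℕ) : Prop :=
  I.Nonempty ∧ I ⊆ S ∧ ∀ i ∈ I, ∀ s ∈ S, i + s ∈ I

/-- The Frobenius number of an ideal `I`: the largest integer not belonging to `I`. -/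
noncomputable def frobeniusNumber (I : Set ℕ) : ℕ := sSup Iᶜ

/-- `I` is a maximum sparse ideal of `S`: its Frobenius number equals
`2g - 1 + #(S \ I)` where `g` is the genus of `S`. -/
def IsMaxSparse (S I : Set ℕ) : Prop :=
  (frobeniusNumber I : ℤ) = 2 * (genus S : ℤ) - 1 + ((S \ I).ncard : ℤ)

/-- The leader of a proper ideal `I` of `S`: the largest element of `S \ I`. -/
noncomputable def leader (S I : Set ℕ) : ℕ := sSup (S \ I)

lemma gap_lt (S : Set ℕ) (hadd : ∀ a ∈ S, ∀ b ∈ S, a + b ∈ S) (hfin : Sᶜ.Finite)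
    (x : ℕ) (hx : x ∈ Sᶜ) : x < 2 * Sᶜ.ncard := by
  set f := sSup Sᶜ with hf
  have hne : Sᶜ.Nonempty := ⟨x, hx⟩
  have hfmem : f ∈ Sᶜ := Nat.sSup_mem hne hfin.bddAbove
  have hxf : x ≤ f := le_csSup hfin.bddAbove hx
  have hsub : (fun y => f - y) '' (S ∩ Set.Iic f) ⊆ Sᶜ := by
    rintro _ ⟨y, ⟨hyS, hyf⟩, rfl⟩
    intro hmem
    exact hfmem (by simpa [Nat.add_sub_cancel' hyf] using hadd y hyS (f - y) hmem)
  have hinj : Set.InjOn (fun y => f - y) (S ∩ Set.Iic f) := by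
    intro a ha b hb hab
    have h2 : f - (f - a) = f - (f - b) := by simp only at hab; rw [hab]
    simpa [Nat.sub_sub_self ha.2, Nat.sub_sub_self hb.2] using h2
  have h1 : (S ∩ Set.Iic f).ncard ≤ Sᶜ.ncard := by
    rw [← Set.ncard_image_of_injOn hinj]
    exact Set.ncard_le_ncard hsub hfin
  have hsplit : (Set.Iic f : Set ℕ) = (S ∩ Set.Iic f) ∪ (Sᶜ ∩ Set.Iic f) := by
    ext y; by_cases hy : y ∈ S <;> simp [hy]
  have hgsub : Sᶜ ∩ Set.Iic f = Sᶜ := by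
    apply Set.inter_eq_left.mpr
    intro y hy; exact le_csSup hfin.bddAbove hy
  have hcard : (Set.Iic f : Set ℕ).ncard = f + 1 := by
    rw [← Finset.coe_Iic, Set.ncard_coe_finset, Nat.card_Iic]
  have hmain : f + 1 ≤ 2 * Sᶜ.ncard := by
    calc f + 1 = (Set.Iic f : Set ℕ).ncard := hcard.symm
    _ = ((S ∩ Set.Iic f) ∪ (Sᶜ ∩ Set.Iic f)).ncard := by rw [← hsplit]
    _ ≤ (S ∩ Set.Iic f).ncard + (Sᶜ ∩ Set.Iic f).ncard :=
        Set.ncard_union_le _ _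
    _ ≤ Sᶜ.ncard + Sᶜ.ncard := by rw [hgsub]; exact Nat.add_le_add_right h1 _
    _ = 2 * Sᶜ.ncard := (two_mul _).symm
  omega

/-- The leader of a proper maximum sparse ideal equals `2g - 1 + #(S \ I)`,
hence is at least `2g`, which is at least the numConductor; in particular the
leader is at least the numConductor. -/
theorem leader_eq_and_ge_conductor (S I : Set ℕ)
    (hS : IsNumericalSemigroup S) (hI : IsIdeal S I) (hproper : I ≠ S)
    (hms : IsMaxSparse S I) :
    (leader S I : ℤ) = 2 * (genus S : ℤ) - 1 + ((S \ I).ncard : ℤ) ∧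
    2 * genus S ≤ leader S I ∧
    numConductor S ≤ 2 * genus S ∧
    numConductor S ≤ leader S I := by
  obtain ⟨h0, hadd, hfin⟩ := hS
  obtain ⟨⟨i, hiI⟩, hIS, hideal⟩ := hI
  -- I is cofinite
  have hIcfin : Iᶜ.Finite := by
    apply Set.Finite.subset ((Set.finite_Iio i).union (hfin.image (fun s => i + s)))
    intro n hn
    by_cases hni : n < i
    · exact Or.inl hni
    · right
      have hin : i + (n - i) = n := by omega
      refine ⟨n - i, ?_, hin⟩
      intro hmem
      exact hn (hin ▸ hideal i hiI (n - i) hmem)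
  -- S \ I nonempty and finite
  have hdiff_sub : S \ I ⊆ Iᶜ := fun x hx => hx.2
  have hdiff_fin : (S \ I).Finite := hIcfin.subset hdiff_sub
  have hdiff_ne : (S \ I).Nonempty := by
    rcases Set.exists_of_ssubset (hIS.ssubset_of_ne hproper) with ⟨x, hxS, hxI⟩
    exact ⟨x, hxS, hxI⟩
  have hk : 1 ≤ (S \ I).ncard := (Set.ncard_pos hdiff_fin).mpr hdiff_ne
  have hIc_ne : Iᶜ.Nonempty := ⟨hdiff_ne.choose, hdiff_sub hdiff_ne.choose_spec⟩
  set F := frobeniusNumber I with hF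
  have hFmem : F ∈ Iᶜ := Nat.sSup_mem hIc_ne hIcfin.bddAbove
  -- F ≥ 2g
  have hF2g : 2 * genus S ≤ F := by
    have := hms
    unfold IsMaxSparse at this
    omega
  -- F ∈ S
  have hFS : F ∈ S := by
    by_contra hFS
    have := gap_lt S hadd hfin F hFS
    have : F < 2 * genus S := this
    omega
  have hFdiff : F ∈ S \ I := ⟨hFS, hFmem⟩
  -- leader = F
  have hL : leader S I = F := by
    apply le_antisymm
    · exact csSup_le hdiff_ne (fun x hx => le_csSup hIcfin.bddAbove (hdiff_sub hx))
    · exact le_csSup (hIcfin.subset hdiff_sub).bddAbove hFdiff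
  have h1 : (leader S I : ℤ) = 2 * (genus S : ℤ) - 1 + ((S \ I).ncard : ℤ) := by
    rw [hL]; exact hms
  refine ⟨h1, ?_, ?_, ?_⟩
  · rw [hL]; exact hF2g
  · apply Nat.sInf_le
    intro m hm
    by_contra hmS
    have := gap_lt S hadd hfin m hmS
    have : m < 2 * genus S := this
    omega
  · calc numConductor S ≤ 2 * genus S := by
          apply Nat.sInf_le
          intro m hm
          by_contra hmS
          have h2 : m < 2 * genus S := gap_lt S hadd hfin m hmS
          omega
      _ ≤ leader S I := by rw [hL]; exact hF2g
end

section
/- Let S be a numerical semigroup of genus g and let I be a proper maximum sparse ideal of S. Then the Frobenius number of I (the largest integer not belonging to I) is itself an element of S; equivalently, the Frobenius number of I equals the largest element of S \ I. -/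
/-- The Frobenius number of a proper maximum sparse ideal belongs to `S`;
equivalently, it equals the largest element of `S \ I`. -/
theorem frobenius_mem_and_eq_leader (S I : Set ℕ)
    (hS : IsNumericalSemigroup S) (hI : IsIdeal S I) (hproper : I ≠ S)
    (hms : IsMaxSparse S I) :
    frobeniusNumber I ∈ S ∧ frobeniusNumber I = sSup (S \ I) := by
  obtain ⟨h0S, hadd, hfin⟩ := hS
  obtain ⟨⟨i₀, hi₀⟩, hIS, hideal⟩ := hI
  -- 0 ∉ I
  have h0I : 0 ∉ I := by
    intro h
    apply hproper
    apply Set.Subset.antisymm hIS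
    intro s hs
    simpa using hideal 0 h s hs
  -- bound for S
  obtain ⟨C, hC⟩ := hfin.bddAbove
  have hSbig : ∀ m, C + 1 ≤ m → m ∈ S := by
    intro m hm
    by_contra h
    exact absurd (hC h) (by omega)
  -- Iᶜ is finite
  have hIc_sub : Iᶜ ⊆ Set.Iic (i₀ + C) := by
    intro x hx
    by_contra hxx
    simp only [Set.mem_Iic, not_le] at hxx
    have hxs : x - i₀ ∈ S := hSbig _ (by omega)
    have : i₀ + (x - i₀) ∈ I := hideal i₀ hi₀ _ hxs
    rw [Nat.add_sub_cancel' (by omega)] at this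
    exact hx this
  have hIc_fin : (Iᶜ : Set ℕ).Finite := (Set.finite_Iic _).subset hIc_sub
  set F := frobeniusNumber I with hFdef
  have hFmem : F ∈ Iᶜ := Set.Nonempty.csSup_mem ⟨0, h0I⟩ hIc_fin
  have hle : ∀ x ∈ Iᶜ, x ≤ F := fun x hx => le_csSup hIc_fin.bddAbove hx
  -- decompose Iᶜ
  have hSI_fin : (S \ I).Finite := hIc_fin.subset (fun x hx => hx.2)
  have hIc_eq : Iᶜ = Sᶜ ∪ (S \ I) := by
    ext x
    constructor
    · intro hx
      by_cases h : x ∈ S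
      · exact Or.inr ⟨h, hx⟩
      · exact Or.inl h
    · rintro (h | h)
      · exact fun hxI => h (hIS hxI)
      · exact h.2
  have hA_card : Iᶜ.ncard = genus S + (S \ I).ncard := by
    rw [hIc_eq, Set.ncard_union_eq _ hfin hSI_fin]
    · rfl
    · exact Set.disjoint_left.mpr (fun x hx hx2 => hx hx2.1)
  -- B
  set B : Set ℕ := {x | x ≤ F ∧ F - x ∉ S} with hBdef
  have hB_fin : B.Finite := (Set.finite_Iic F).subset (fun x hx => hx.1)
  have hB_card : B.ncard ≤ genus S := by
    have hinj : Set.InjOn (fun x => F - x) B := by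
      intro a ha b hb hab
      simp only at hab
      have := ha.1; have := hb.1
      omega
    have himg : (fun x => F - x) '' B ⊆ Sᶜ := by
      rintro _ ⟨x, hx, rfl⟩
      exact hx.2
    calc B.ncard = ((fun x => F - x) '' B).ncard := (Set.ncard_image_of_injOn hinj).symm
      _ ≤ Sᶜ.ncard := Set.ncard_le_ncard himg hfin
  -- cover
  have hcover : Set.Iic F ⊆ Iᶜ ∪ B := by
    intro x hx
    simp only [Set.mem_Iic] at hx
    by_contra h
    simp only [Set.mem_union, Set.mem_compl_iff, not_or, not_not, hBdef,
      Set.mem_setOf_eq, not_and, not_not] at h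
    obtain ⟨hxI, hxB⟩ := h
    have hFS : F - x ∈ S := hxB hx
    have : x + (F - x) ∈ I := hideal x hxI _ hFS
    rw [Nat.add_sub_cancel' hx] at this
    exact hFmem this
  have hIic_card : (Set.Iic F).ncard = F + 1 := by
    rw [← Finset.coe_Iic, Set.ncard_coe_finset, Nat.card_Iic]
  have hFval : F + 1 = 2 * genus S + (S \ I).ncard := by
    have := hms
    unfold IsMaxSparse at this
    omega
  have hunion_ge : F + 1 ≤ (Iᶜ ∪ B).ncard := by
    rw [← hIic_card]
    exact Set.ncard_le_ncard hcover (hIc_fin.union hB_fin)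
  have hinter : (Iᶜ ∩ B).ncard = 0 := by
    have h1 : (Iᶜ ∪ B).ncard + (Iᶜ ∩ B).ncard = Iᶜ.ncard + B.ncard :=
      Set.ncard_union_add_ncard_inter _ _ hIc_fin hB_fin
    omega
  have hdisj : Iᶜ ∩ B = ∅ := by
    rw [← Set.ncard_eq_zero ((hIc_fin.inter_of_left _))] at *
    exact hinter
  -- 0 ∈ Iᶜ, so 0 ∉ B, so F ∈ S
  have hFS : F ∈ S := by
    by_contra h
    have : (0 : ℕ) ∈ Iᶜ ∩ B := ⟨h0I, ⟨Nat.zero_le _, by simpa using h⟩⟩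
    rw [hdisj] at this
    exact this
  refine ⟨hFS, ?_⟩
  have hFSI : F ∈ S \ I := ⟨hFS, hFmem⟩
  exact le_antisymm (le_csSup hSI_fin.bddAbove hFSI)
    (csSup_le ⟨F, hFSI⟩ (fun x hx => hle x hx.2))
end

section
/- Let S be a numerical semigroup and let I, I' be proper maximum sparse ideals of S with leaders λ and λ' respectively. If I ⊆ I', then λ - λ' ∈ S (in particular λ ≥ λ'). -/
/-- Key structural lemma for proper maximum sparse ideals. -/
lemma maxSparse_key (S I : Set ℕ) (hS : IsNumericalSemigroup S)
    (hI : IsIdeal S I) (hproper : I ≠ S) (hms : IsMaxSparse S I) :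
    Iᶜ.Finite ∧ frobeniusNumber I ∉ I ∧ leader S I = frobeniusNumber I ∧
      (∀ x, x ≤ frobeniusNumber I → x ∉ S → frobeniusNumber I - x ∈ I) := by
  classical
  obtain ⟨hI_ne, hIS, hIdl⟩ := hI
  set F := frobeniusNumber I with hF
  -- Iᶜ is finite
  obtain ⟨i₀, hi₀⟩ := hI_ne
  have hfin : Iᶜ.Finite := by
    apply Set.Finite.subset ((Set.finite_Iio i₀).union (hS.2.2.image (fun m => i₀ + m)))
    intro n hn
    by_cases h : n < i₀
    · exact Or.inl h
    · right
      refine ⟨n - i₀, ?_, by simp; omega⟩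
      intro hmem
      exact hn (by simpa [Nat.add_sub_cancel' (not_lt.mp h)] using hIdl i₀ hi₀ _ hmem)
  have hne : Iᶜ.Nonempty := by
    obtain ⟨x, hxS, hxI⟩ := Set.exists_of_ssubset (hIS.ssubset_of_ne hproper)
    exact ⟨x, hxI⟩
  have hbdd : BddAbove Iᶜ := hfin.bddAbove
  have hFnotin : F ∉ I := Nat.sSup_mem hne hbdd
  have hleF : ∀ x, x ∉ I → x ≤ F := fun x hx => le_csSup hbdd hx
  -- cardinalities
  have hScIc : Sᶜ ⊆ Iᶜ := Set.compl_subset_compl.mpr hIS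
  have hIc_eq : Iᶜ = Sᶜ ∪ (S \ I) := by
    ext x
    by_cases hxS : x ∈ S
    · simp [hxS]
    · have hxI : x ∉ I := fun h => hxS (hIS h)
      simp [hxS, hxI]
  have hdSI : (S \ I).Finite := hfin.subset (fun x hx => hx.2)
  have hIccard : Iᶜ.ncard = genus S + (S \ I).ncard := by
    rw [hIc_eq, Set.ncard_union_eq ?_ hS.2.2 hdSI]
    · rfl
    · exact Set.disjoint_left.mpr (fun x hx hx' => hx hx'.1)
  set g := genus S
  set m := (S \ I).ncard
  have hFeq : F + 1 = 2 * g + m := by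
    have : (F : ℤ) + 1 = 2 * g + m := by rw [hms]; ring
    exact_mod_cast this
  set R := Finset.range (F + 1) with hR
  set P := R.filter (fun x => x ∈ S) with hP
  set Q := R.filter (fun x => F - x ∈ I) with hQ
  have hPcard : P.card + g = F + 1 := by
    have h1 := Finset.card_filter_add_card_filter_not (s := R)
      (p := fun x => x ∈ S)
    have h2 : R.filter (fun x => ¬ x ∈ S) = hS.2.2.toFinset := by
      ext x
      simp only [Finset.mem_filter, hR, Finset.mem_range, Set.Finite.mem_toFinset,
        Set.mem_compl_iff]
      constructor
      · exact fun h => h.2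
      · exact fun h => ⟨Nat.lt_succ_of_le (hleF x (fun hx => h (hIS hx))), h⟩
    have h3 : g = hS.2.2.toFinset.card := Set.ncard_eq_toFinset_card _ hS.2.2
    rw [h2, ← h3] at h1
    simpa [hR] using h1
  have hQcard : Q.card + (g + m) = F + 1 := by
    have h1 := Finset.card_filter_add_card_filter_not (s := R)
      (p := fun x => x ∈ I)
    have h2 : R.filter (fun x => ¬ x ∈ I) = hfin.toFinset := by
      ext x
      simp only [Finset.mem_filter, hR, Finset.mem_range, Set.Finite.mem_toFinset,
        Set.mem_compl_iff]
      exact ⟨fun h => h.2, fun h => ⟨Nat.lt_succ_of_le (hleF x h), h⟩⟩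
    have h3 : Iᶜ.ncard = hfin.toFinset.card := Set.ncard_eq_toFinset_card _ hfin
    have h4 : Q.card = (R.filter (fun x => x ∈ I)).card := by
      apply Finset.card_bij' (fun x _ => F - x) (fun y _ => F - y)
      · intro x hx
        simp only [hQ, Finset.mem_filter, hR, Finset.mem_range] at hx
        simp only [Finset.mem_filter, hR, Finset.mem_range]
        exact ⟨by omega, hx.2⟩
      · intro y hy
        simp only [Finset.mem_filter, hR, Finset.mem_range] at hy
        simp only [hQ, Finset.mem_filter, hR, Finset.mem_range]
        constructor
        · omega
        · have : F - (F - y) = y := by omega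
          rw [this]; exact hy.2
      · intro x hx
        simp only [hQ, Finset.mem_filter, hR, Finset.mem_range] at hx
        omega
      · intro y hy
        simp only [Finset.mem_filter, hR, Finset.mem_range] at hy
        omega
    rw [h4]
    rw [h2, ← h3, hIccard] at h1
    simpa [hR] using h1
  have hdisj : Disjoint P Q := by
    rw [Finset.disjoint_left]
    intro x hxP hxQ
    simp only [hP, Finset.mem_filter, hR, Finset.mem_range] at hxP
    simp only [hQ, Finset.mem_filter, hR, Finset.mem_range] at hxQ
    have := hIdl _ hxQ.2 x hxP.2
    have hx : F - x + x = F := by omega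
    rw [hx] at this
    exact hFnotin this
  have hunion : P ∪ Q = R := by
    apply Finset.eq_of_subset_of_card_le
    · exact Finset.union_subset (Finset.filter_subset _ _) (Finset.filter_subset _ _)
    · rw [Finset.card_union_of_disjoint hdisj]
      simp only [hR, Finset.card_range]
      omega
  have hard : ∀ x, x ≤ F → x ∉ S → F - x ∈ I := by
    intro x hxF hxS
    have hxR : x ∈ R := by simp [hR]; omega
    rw [← hunion, Finset.mem_union] at hxR
    rcases hxR with h | h
    · exact absurd (Finset.mem_filter.mp h).2 hxS
    · exact (Finset.mem_filter.mp h).2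
  -- 0 ∉ I
  have h0 : (0 : ℕ) ∉ I := by
    intro h
    exact hproper (Set.Subset.antisymm hIS (fun s hs => by simpa using hIdl 0 h s hs))
  -- F ∈ S
  have hFS : F ∈ S := by
    by_contra h
    have := hard F le_rfl h
    simp at this
    exact h0 this
  -- leader = F
  have hlead : leader S I = F := by
    apply le_antisymm
    · exact csSup_le ⟨F, hFS, hFnotin⟩ (fun x hx => hleF x hx.2)
    · exact le_csSup (hdSI.bddAbove) ⟨hFS, hFnotin⟩
  exact ⟨hfin, hFnotin, hlead, hard⟩


/-- If `I ⊆ I'` are proper maximum sparse ideals with leaders `λ`, `λ'`, then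
`λ' ≤ λ` and `λ - λ' ∈ S`. -/
theorem leader_sub_leader_mem (S I I' : Set ℕ)
    (hS : IsNumericalSemigroup S)
    (hI : IsIdeal S I) (hproperI : I ≠ S) (hmsI : IsMaxSparse S I)
    (hI' : IsIdeal S I') (hproperI' : I' ≠ S) (hmsI' : IsMaxSparse S I')
    (hsub : I ⊆ I') :
    leader S I' ≤ leader S I ∧ leader S I - leader S I' ∈ S := by
  obtain ⟨hfin, hFnotin, hlead, hard⟩ := maxSparse_key S I hS hI hproperI hmsI
  obtain ⟨hfin', hFnotin', hlead', hard'⟩ := maxSparse_key S I' hS hI' hproperI' hmsI'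
  have hne' : I'ᶜ.Nonempty := ⟨frobeniusNumber I', hFnotin'⟩
  have hFF : frobeniusNumber I' ≤ frobeniusNumber I :=
    csSup_le_csSup hfin.bddAbove hne' (Set.compl_subset_compl.mpr hsub)
  rw [hlead, hlead']
  refine ⟨hFF, ?_⟩
  by_contra h
  have := hard (frobeniusNumber I - frobeniusNumber I') (by omega) h
  have heq : frobeniusNumber I - (frobeniusNumber I - frobeniusNumber I') = frobeniusNumber I' := by
    omega
  rw [heq] at this
  exact hFnotin' (hsub this)
end

section
/- Let S be a numerical semigroup with conductor c, and let λ be a nonzero element of S with λ < c. Then there exist gaps a, b of S (i.e., a, b ∈ ℕ \ S) with a + b = λ. In other words, every positive non-gap smaller than the conductor is a sum of two gaps. -/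
/-- Every positive non-gap smaller than the numConductor is a sum of two gaps. -/
theorem nongap_lt_conductor_sum_of_gaps (S : Set ℕ)
    (hS : IsNumericalSemigroup S) (lam : ℕ) (hlam : lam ∈ S) (hne : lam ≠ 0)
    (hlt : lam < numConductor S) :
    ∃ a b : ℕ, a ∉ S ∧ b ∉ S ∧ a + b = lam := by
  classical
  obtain ⟨h0, hadd, hfin⟩ := hS
  have hne' : {c : ℕ | ∀ m, c ≤ m → m ∈ S}.Nonempty := by
    obtain ⟨N, hN⟩ := hfin.bddAbove
    refine ⟨N + 1, fun m hm => ?_⟩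
    by_contra hmS
    exact absurd (hN hmS) (by omega)
  have hcmem : ∀ m, numConductor S ≤ m → m ∈ S := Nat.sInf_mem hne'
  have hc1 : 1 ≤ numConductor S := by omega
  -- c - 1 is a gap
  have hcgap : numConductor S - 1 ∉ S := by
    intro hcs
    have : numConductor S ≤ numConductor S - 1 := by
      apply Nat.sInf_le
      intro m hm
      rcases Nat.lt_or_ge m (numConductor S) with h | h
      · have : m = numConductor S - 1 := by omega
        rwa [this]
      · exact hcmem m h
    omega
  -- 1 is a gap
  have h1 : 1 ∉ S := by
    intro h1S
    apply hcgap
    have : ∀ n : ℕ, n ∈ S := by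
      intro n
      induction n with
      | zero => exact h0
      | succ k ih => exact hadd k ih 1 h1S
    exact this _
  have hlam2 : 2 ≤ lam := by
    rcases Nat.lt_or_ge lam 2 with h | h
    · interval_cases lam
      · exact absurd rfl hne
      · exact absurd hlam h1
    · exact h
  set b := Nat.findGreatest (fun x => x ∉ S) (lam - 1) with hbdef
  have hb1 : 1 ≤ b := Nat.le_findGreatest (by omega) h1
  have hbS : b ∉ S := by
    rw [hbdef]
    exact Nat.findGreatest_spec (P := fun x => x ∉ S) (m := 1) (n := lam - 1) (by omega) h1
  have hble : b ≤ lam - 1 := Nat.findGreatest_le _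
  have hmax : ∀ x, b < x → x ≤ lam - 1 → x ∈ S := by
    intro x hx1 hx2
    by_contra hxS
    exact Nat.findGreatest_is_greatest hx1 hx2 hxS
  refine ⟨lam - b, b, ?_, hbS, by omega⟩
  intro haS
  have key : ∀ m, b + 1 ≤ m → m ∈ S := by
    intro m
    induction m using Nat.strong_induction_on with
    | _ m ih =>
      intro hm
      rcases Nat.lt_or_ge m lam with h | h
      · exact hmax m (by omega) (by omega)
      · rcases Nat.eq_or_lt_of_le h with h' | h'
        · rwa [← h']
        · have hsub : m - (lam - b) ∈ S := ih (m - (lam - b)) (by omega) (by omega)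
          have := hadd _ hsub _ haS
          have heq : m - (lam - b) + (lam - b) = m := by omega
          rwa [heq] at this
  have : numConductor S ≤ b + 1 := Nat.sInf_le key
  omega
end

section
/- Let S be a numerical semigroup with conductor c. Let λ ∈ S with λ ≥ c and let μ ∈ S. If there exist gaps a, b of S with a + b = λ + μ, then there exist gaps a', b' of S with a' + b' = λ. (Concretely, in this situation both a and b are greater than μ and a - μ is a gap, so (a - μ) + b = λ is a sum of two gaps.) -/
/-- If `λ ∈ S` with `λ` at least the numConductor, `μ ∈ S`, and `λ + μ` is a sum
of two gaps of `S`, then `λ` itself is a sum of two gaps of `S`. -/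
theorem sum_of_gaps_descends (S : Set ℕ) (hS : IsNumericalSemigroup S)
    (lam mu : ℕ) (hlam : lam ∈ S) (hc : numConductor S ≤ lam) (hmu : mu ∈ S)
    (h : ∃ a b : ℕ, a ∉ S ∧ b ∉ S ∧ a + b = lam + mu) :
    ∃ a' b' : ℕ, a' ∉ S ∧ b' ∉ S ∧ a' + b' = lam := by
  obtain ⟨a, b, ha, hb, hab⟩ := h
  obtain ⟨h0, hadd, hfin⟩ := hS
  -- the conductor has the conductor property
  have hne : {c : ℕ | ∀ m, c ≤ m → m ∈ S}.Nonempty := by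
    obtain ⟨B, hB⟩ := hfin.bddAbove
    exact ⟨B + 1, fun m hm => by
      by_contra hmS
      exact absurd (hB hmS) (by omega)⟩
  have hconda : ∀ m, numConductor S ≤ m → m ∈ S := Nat.sInf_mem hne
  -- a > mu
  have hamu : mu < a := by
    by_contra hle
    push_neg at hle
    have : lam ≤ b := by omega
    exact hb (hconda b (le_trans hc this))
  refine ⟨a - mu, b, ?_, hb, by omega⟩
  intro hmem
  have := hadd _ hmem _ hmu
  rw [Nat.sub_add_cancel (le_of_lt hamu)] at this
  exact ha this
end

section
/- Let S be a numerical semigroup and let L be the set of all nonzero elements λ of S such that λ is not expressible as a sum of two gaps of S. Then L is an ideal of S, i.e., L ⊆ S and L + S ⊆ L. Moreover every element of L is greater than or equal to the conductor of S. -/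
/-- The set `L` of nonzero elements of `S` that are not a sum of two gaps is
an ideal of `S` (`L ⊆ S` and `L + S ⊆ L`), and every element of `L` is at
least the numConductor. -/
theorem notSumTwoGaps_isIdeal (S : Set ℕ) (hS : IsNumericalSemigroup S) :
    let L : Set ℕ :=
      {lam | lam ∈ S ∧ lam ≠ 0 ∧ ¬ ∃ a b : ℕ, a ∉ S ∧ b ∉ S ∧ a + b = lam}
    L ⊆ S ∧ (∀ l ∈ L, ∀ s ∈ S, l + s ∈ L) ∧ ∀ l ∈ L, numConductor S ≤ l := by
  intro L
  obtain ⟨h0, hadd, hfin⟩ := hS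
  -- a gap minus an element of S is a gap
  have hgap : ∀ g, g ∉ S → ∀ t ∈ S, t ≤ g → g - t ∉ S := by
    intro g hg t ht hle hmem
    have h2 := hadd _ hmem _ ht
    rw [Nat.sub_add_cancel hle] at h2
    exact hg h2
  have hne : {c : ℕ | ∀ m, c ≤ m → m ∈ S}.Nonempty := by
    obtain ⟨N, hN⟩ := hfin.bddAbove
    refine ⟨N + 1, fun m hm => ?_⟩
    by_contra h
    exact absurd (hN h) (by omega)
  have hcond : ∀ m, numConductor S ≤ m → m ∈ S := Nat.sInf_mem hne
  -- key descent lemma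
  have key : ∀ s ∈ S, (¬ ∃ a b : ℕ, a ∉ S ∧ b ∉ S ∧ a + b = s) →
      ∀ r, r < s → r ∉ S → r + s ∉ S → False := by
    intro s hs hns r
    induction r using Nat.strong_induction_on with
    | _ r IH =>
      intro hrs hrS hrsS
      have hr0 : 0 < r := by
        rcases Nat.eq_zero_or_pos r with h | h
        · exact absurd (h ▸ h0) hrS
        · exact h
      have Q : ∀ k, 1 ≤ k → k * r ≤ s + r → k * r ∉ S := by
        intro k
        induction k with
        | zero => omega
        | succ k IHk =>
          intro _ hle
          rcases Nat.eq_zero_or_pos k with hk0 | hk1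
          · subst hk0; simpa using hrS
          · have hkr : k * r ≤ s := by
              have : (k + 1) * r = k * r + r := by ring
              omega
            have hkrS : k * r ∉ S := IHk hk1 (by omega)
            have hkrlt : k * r < s := lt_of_le_of_ne hkr (fun h => hkrS (h ▸ hs))
            have hsub : s - k * r ∈ S := by
              by_contra h
              exact hns ⟨k * r, s - k * r, hkrS, h, by omega⟩
            intro hmem
            have h2 := hadd _ hsub _ hmem
            have heq : s - k * r + (k + 1) * r = r + s := by
              have : (k + 1) * r = k * r + r := by ring
              omega
            rw [heq] at h2
            exact hrsS h2
      -- pick k = q + 1 where q = s / r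
      obtain ⟨q, m, hqm, hmlt⟩ : ∃ q m, r * q + m = s ∧ m < r :=
        ⟨s / r, s % r, Nat.div_add_mod s r, Nat.mod_lt _ hr0⟩
      have hkmul : (q + 1) * r = r * q + r := by ring
      have hcm : q * r = r * q := Nat.mul_comm q r
      have hkub : (q + 1) * r ≤ s + r := by omega
      have hklb : s < (q + 1) * r := by omega
      have hmS : (q + 1) * r ∉ S := Q (q + 1) (by omega) hkub
      -- cannot have (q+1)*r = s + r
      have hne2 : (q + 1) * r ≠ s + r := by
        intro h
        have hq1 : 1 ≤ q := by
          rcases Nat.eq_zero_or_pos q with h0' | h1'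
          · subst h0'; omega
          · exact h1'
        have := Q q hq1 (by omega)
        have hsk : q * r = s := by omega
        rw [hsk] at this
        exact this hs
      set M := (q + 1) * r with hMdef
      have hsm : s < M := hklb
      have hr' : M - s ∉ S := hgap M hmS s hs (by omega)
      have hlt : M - s < r := by omega
      have hr's : M - s + s ∉ S := by
        have hq : M - s + s = M := by omega
        rw [hq]; exact hmS
      exact IH (M - s) hlt (by omega) hr' hr's
  -- elements of S below the conductor that are nonzero are sums of two gaps
  have hlow : ∀ s ∈ S, s ≠ 0 → (¬ ∃ a b : ℕ, a ∉ S ∧ b ∉ S ∧ a + b = s) →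
      numConductor S ≤ s := by
    intro s hs hs0 hns
    by_contra hlt
    push_neg at hlt
    have hc0 : 0 < numConductor S := by omega
    have hF : numConductor S - 1 ∉ S := by
      have hnm : numConductor S - 1 ∉ {c : ℕ | ∀ m, c ≤ m → m ∈ S} :=
        Nat.notMem_of_lt_sInf (show numConductor S - 1 < numConductor S by omega)
      simp only [Set.mem_setOf_eq, not_forall] at hnm
      obtain ⟨m, hm1, hm2⟩ := hnm
      have : m = numConductor S - 1 := by
        by_contra h
        exact hm2 (hcond m (by omega))
      exact this ▸ hm2
    set F := numConductor S - 1 with hFdef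
    have hsF : s < F := by
      have hne3 : s ≠ F := fun h => hF (h ▸ hs)
      omega
    have hs0' : 0 < s := by omega
    have D : ∀ j, j * s ≤ F → F - j * s ∉ S := by
      intro j
      induction j with
      | zero => simpa using hF
      | succ j IHj =>
        intro hle
        have hj : j * s ≤ F := by
          have : (j + 1) * s = j * s + s := by ring
          omega
        have h1 := hgap (F - j * s) (IHj hj) s hs (by
          have : (j + 1) * s = j * s + s := by ring
          omega)
        have : F - j * s - s = F - (j + 1) * s := by
          have : (j + 1) * s = j * s + s := by ring
          omega
        rwa [this] at h1
    obtain ⟨j, u, hju, hult⟩ : ∃ j u, s * j + u = F ∧ u < s :=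
      ⟨F / s, F % s, Nat.div_add_mod F s, Nat.mod_lt _ hs0'⟩
    have hj1 : 1 ≤ j := by
      rcases Nat.eq_zero_or_pos j with h0' | h1'
      · subst h0'; omega
      · exact h1'
    obtain ⟨j', rfl⟩ : ∃ j', j = j' + 1 := ⟨j - 1, by omega⟩
    have e1 : (j' + 1) * s = s * j' + s := by ring
    have e2 : j' * s = s * j' := Nat.mul_comm j' s
    have e3 : s * (j' + 1) = s * j' + s := by ring
    have hrS : F - (j' + 1) * s ∉ S := D (j' + 1) (by omega)
    have hr'eq : F - (j' + 1) * s = u := by omega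
    rw [hr'eq] at hrS
    have hrsS : u + s ∉ S := by
      have h3 := D j' (by omega)
      have h4 : F - j' * s = u + s := by omega
      rwa [h4] at h3
    exact key s hs hns u hult hrS hrsS
  refine ⟨fun l hl => hl.1, ?_, fun l hl => hlow l hl.1 hl.2.1 hl.2.2⟩
  rintro l ⟨hlS, hl0, hlns⟩ s hsS
  refine ⟨hadd _ hlS _ hsS, by omega, ?_⟩
  rintro ⟨a, b, ha, hb, hab⟩
  have hlc : numConductor S ≤ l := hlow l hlS hl0 hlns
  have hbc : b < numConductor S := by
    by_contra h
    exact hb (hcond b (by omega))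
  have hsa : s ≤ a := by omega
  have has : a - s ∉ S := hgap a ha s hsS hsa
  exact hlns ⟨a - s, b, has, hb, by omega⟩
end

section
/- (Combinatorial content of the puncturing theorem.) Let W be a numerical semigroup of genus g. Let A and A' be finite subsets of W, each containing 0, with A' ⊆ A, such that both W \ A and W \ A' are proper maximum sparse ideals of W. Set n = #A and n' = #A'. Then n - n' ∈ W. In particular, if n' < n then n - n' is at least the multiplicity (smallest nonzero element) of W. -/
theorem mem_of_two_genus_le (W : Set ℕ)
    (hadd : ∀ a ∈ W, ∀ b ∈ W, a + b ∈ W)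
    (hWc : Wᶜ.Finite) {m : ℕ} (hm : 2 * Wᶜ.ncard ≤ m) : m ∈ W := by
  by_contra hmW
  have hmaps : ∀ x ∈ W ∩ Set.Iic m, (fun i => m - i) x ∈ Wᶜ := by
    rintro x ⟨hxW, hxm⟩ hcon
    exact hmW (by simpa [Nat.add_sub_cancel' hxm] using hadd x hxW _ hcon)
  have hinj : Set.InjOn (fun i => m - i) (W ∩ Set.Iic m) := by
    intro x hx y hy hxy
    have hx2 : x ≤ m := hx.2
    have hy2 : y ≤ m := hy.2
    simp only at hxy
    omega
  have c1 : (W ∩ Set.Iic m).ncard ≤ Wᶜ.ncard :=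
    Set.ncard_le_ncard_of_injOn _ hmaps hinj hWc
  have c2 : (Wᶜ ∩ Set.Iic m).ncard ≤ Wᶜ.ncard :=
    Set.ncard_le_ncard Set.inter_subset_left hWc
  have hpart : Set.Iic m = (W ∩ Set.Iic m) ∪ (Wᶜ ∩ Set.Iic m) := by
    ext x; by_cases hx : x ∈ W <;> simp [hx]
  have hfin : (Set.Iic m).ncard = m + 1 := by
    rw [← Finset.coe_Iic, Set.ncard_coe_finset, Nat.card_Iic]
  have hdisj : Disjoint (W ∩ Set.Iic m) (Wᶜ ∩ Set.Iic m) := by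
    apply Set.disjoint_left.mpr
    rintro x ⟨h1, _⟩ ⟨h2, _⟩; exact h2 h1
  have := Set.ncard_union_eq hdisj ((Set.finite_Iic m).subset Set.inter_subset_right)
      ((Set.finite_Iic m).subset Set.inter_subset_right)
  rw [← hpart, hfin] at this
  omega

theorem frob_basic (W B : Set ℕ) (hW : IsNumericalSemigroup W) (hB : B.Finite)
    (h0B : 0 ∈ B) (hBW : B ⊆ W) (hms : IsMaxSparse W (W \ B)) :
    frobeniusNumber (W \ B) + 1 = 2 * Wᶜ.ncard + B.ncard ∧
    frobeniusNumber (W \ B) ∈ B ∧ ∀ b ∈ B, b ≤ frobeniusNumber (W \ B) := by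
  obtain ⟨h0W, hadd, hWc⟩ := hW
  have hcompl : (W \ B)ᶜ = Wᶜ ∪ B := by
    ext x; simp only [Set.mem_compl_iff, Set.mem_diff, Set.mem_union]; tauto
  have hfin : (W \ B)ᶜ.Finite := by rw [hcompl]; exact hWc.union hB
  have hne : (W \ B)ᶜ.Nonempty := ⟨0, by rw [hcompl]; exact Or.inr h0B⟩
  have hmem : frobeniusNumber (W \ B) ∈ (W \ B)ᶜ := Nat.sSup_mem hne hfin.bddAbove
  have hWB : W \ (W \ B) = B := by
    ext x; simp only [Set.mem_diff]
    constructor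
    · rintro ⟨hxW, hx⟩; tauto
    · intro hx; exact ⟨hBW hx, fun h => h.2 hx⟩
  unfold IsMaxSparse genus at hms
  rw [hWB] at hms
  have hn1 : 0 < B.ncard := (Set.ncard_pos hB).mpr ⟨0, h0B⟩
  have hkey : frobeniusNumber (W \ B) + 1 = 2 * Wᶜ.ncard + B.ncard := by omega
  have hℓW : frobeniusNumber (W \ B) ∈ W :=
    mem_of_two_genus_le W hadd hWc (by omega)
  have hℓB : frobeniusNumber (W \ B) ∈ B := by
    rcases Set.mem_compl_iff _ _ |>.mp hmem |> (fun h => h) with h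
    by_contra hc
    exact h ⟨hℓW, hc⟩
  refine ⟨hkey, hℓB, fun b hb => ?_⟩
  exact le_csSup hfin.bddAbove (fun h => h.2 hb)

/-- Combinatorial content of the puncturing theorem: if `A' ⊆ A` are finite
subsets of `W` containing `0` whose complements `W \ A` and `W \ A'` are proper
maximum sparse ideals of `W`, then `#A - #A' ∈ W`; in particular, if
`#A' < #A` then the difference is at least the multiplicity of `W`. -/
theorem puncturing_card_diff_mem (W A A' : Set ℕ)
    (hW : IsNumericalSemigroup W)
    (hA : A.Finite) (hA' : A'.Finite) (h0A : 0 ∈ A) (h0A' : 0 ∈ A')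
    (hsub : A' ⊆ A)
    (hAW : A ⊆ W) (hA'W : A' ⊆ W)
    (hIdA : IsIdeal W (W \ A)) (hpropA : W \ A ≠ W) (hmsA : IsMaxSparse W (W \ A))
    (hIdA' : IsIdeal W (W \ A')) (hpropA' : W \ A' ≠ W)
    (hmsA' : IsMaxSparse W (W \ A')) :
    A.ncard - A'.ncard ∈ W ∧
    (A'.ncard < A.ncard → sInf {s ∈ W | s ≠ 0} ≤ A.ncard - A'.ncard) := by
  obtain ⟨h0W, hadd, hWc⟩ := hW
  set g := Wᶜ.ncard with hg
  set n := A.ncard with hn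
  set n' := A'.ncard with hn'
  set ℓ := frobeniusNumber (W \ A) with hℓdef
  set ℓ' := frobeniusNumber (W \ A') with hℓ'def
  obtain ⟨hℓeq, hℓA, hAle⟩ := frob_basic W A ⟨h0W, hadd, hWc⟩ hA h0A hAW hmsA
  obtain ⟨hℓ'eq, hℓ'A', _⟩ := frob_basic W A' ⟨h0W, hadd, hWc⟩ hA' h0A' hA'W hmsA'
  have hℓ'A : ℓ' ∈ A := hsub hℓ'A'
  have hℓ'le : ℓ' ≤ ℓ := hAle ℓ' hℓ'A
  have hn1 : 0 < n := (Set.ncard_pos hA).mpr ⟨0, h0A⟩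
  have hgap_le : ∀ y, y ∉ W → y ≤ ℓ := by
    intro y hy
    by_contra hc
    exact hy (mem_of_two_genus_le W hadd hWc (by omega))
  -- the set T = (W \ A) ∩ [0, ℓ] has cardinality g
  set T := (W \ A) ∩ Set.Iic ℓ with hT
  have hTfin : T.Finite := (Set.finite_Iic ℓ).subset Set.inter_subset_right
  have hpart : Set.Iic ℓ = Wᶜ ∪ (A ∪ T) := by
    ext x
    simp only [Set.mem_Iic, Set.mem_union, Set.mem_compl_iff, hT, Set.mem_inter_iff,
      Set.mem_diff]
    constructor
    · intro hx
      by_cases hxW : x ∈ W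
      · by_cases hxA : x ∈ A
        · tauto
        · exact Or.inr (Or.inr ⟨⟨hxW, hxA⟩, hx⟩)
      · exact Or.inl hxW
    · rintro (h | h | h)
      · exact hgap_le x h
      · exact hAle x h
      · exact h.2
  have hdisj1 : Disjoint Wᶜ (A ∪ T) := by
    apply Set.disjoint_left.mpr
    rintro x hx (h | h)
    · exact hx (hAW h)
    · exact hx h.1.1
  have hdisj2 : Disjoint A T := by
    apply Set.disjoint_left.mpr
    rintro x hx h
    exact h.1.2 hx
  have hcard : ℓ + 1 = g + (n + T.ncard) := by
    have e1 : (Set.Iic ℓ).ncard = ℓ + 1 := by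
      rw [← Finset.coe_Iic, Set.ncard_coe_finset, Nat.card_Iic]
    have e2 := Set.ncard_union_eq hdisj1 hWc (hA.union hTfin)
    have e3 := Set.ncard_union_eq hdisj2 hA hTfin
    rw [← hpart, e1, e3] at e2
    omega
  have hTcard : T.ncard = g := by omega
  -- the image of T under x ↦ ℓ - x is exactly the set of gaps
  have hℓnotI : ℓ ∉ W \ A := fun h => h.2 hℓA
  have hsubset : (fun x => ℓ - x) '' T ⊆ Wᶜ := by
    rintro y ⟨x, ⟨⟨hxW, hxA⟩, hxℓ⟩, rfl⟩
    intro hcon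
    have := hIdA.2.2 x ⟨hxW, hxA⟩ _ hcon
    rw [Nat.add_sub_cancel' hxℓ] at this
    exact hℓnotI this
  have hinjT : Set.InjOn (fun x => ℓ - x) T := by
    intro x hx y hy hxy
    have hx2 : x ≤ ℓ := hx.2
    have hy2 : y ≤ ℓ := hy.2
    simp only at hxy
    omega
  have himg : (fun x => ℓ - x) '' T = Wᶜ := by
    apply Set.eq_of_subset_of_ncard_le hsubset _ hWc
    rw [Set.ncard_image_of_injOn hinjT, hTcard]
  -- the difference d = ℓ - ℓ' belongs to A
  set d := ℓ - ℓ' with hd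
  have hdA : d ∈ A := by
    by_cases hdW : d ∈ W
    · by_contra hdA
      have hmem : d + ℓ' ∈ W \ A := hIdA.2.2 d ⟨hdW, hdA⟩ ℓ' (hAW hℓ'A)
      have : d + ℓ' = ℓ := by omega
      rw [this] at hmem
      exact hℓnotI hmem
    · have : d ∈ Wᶜ := hdW
      rw [← himg] at this
      obtain ⟨x, ⟨⟨hxW, hxA⟩, hxℓ⟩, hx⟩ := this
      have hx' : ℓ - x = d := hx
      have hxle : x ≤ ℓ := hxℓ
      have hxeq : x = ℓ' := by omega
      rw [hxeq] at hxA
      exact absurd hℓ'A hxA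
  have hdeq : n - n' = d := by omega
  rw [hdeq]
  exact ⟨hAW hdA, fun hlt => Nat.sInf_le ⟨hAW hdA, by omega⟩⟩
end
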